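/- arXiv:2206.03774 — 2 statements merged into one kernel-verified Lean document; each statement's English description precedes it below -/
import Mathlib

section
/- Let n ≥ 2, m ≥ 2, and let σ : Fin m → Fin n be injective. Define the subcomposition map Sub : Δ°ₙ → Δ°ₘ by Sub(λ) j = λ (σ j) / ∑ k, λ (σ k). Then Sub is linear for the compositional vector space structures: for all λ, μ ∈ Δ°ₙ and c ∈ ℝ, Sub(λ ⊕ μ) = Sub(λ) ⊕ Sub(μ) and Sub(c ⊙ λ) = c ⊙ Sub(λ), where on the left ⊕ and ⊙ are the perturbation and powering of Δ°ₙ and on the right those of Δ°ₘ. -/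
open Real Finset

/-- The open probability simplex. -/
def simplex' (d : ℕ) : Set (Fin d → ℝ) :=
  {l | (∀ i, 0 < l i) ∧ ∑ i, l i = 1}

/-- The perturbation operation on the open simplex. -/
noncomputable def pert (d : ℕ) (l m : Fin d → ℝ) : Fin d → ℝ :=
  fun i => l i * m i / ∑ j, l j * m j

/-- The powering operation on the open simplex (real powers via `Real.rpow`). -/
noncomputable def spow (d : ℕ) (c : ℝ) (l : Fin d → ℝ) : Fin d → ℝ :=
  fun i => l i ^ c / ∑ j, l j ^ c

/-- The subcomposition map `Sub : Δ°ₙ → Δ°ₘ` along an injective selection `σ`. -/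
noncomputable def subc (n m : ℕ) (σ : Fin m → Fin n) (l : Fin n → ℝ) : Fin m → ℝ :=
  fun j => l (σ j) / ∑ k, l (σ k)

/-- the subcomposition map is linear for the compositional vector
space structures: it commutes with perturbation and with powering. -/
theorem stmt14 (n m : ℕ) (hn : 2 ≤ n) (hm : 2 ≤ m)
    (σ : Fin m → Fin n) (hσ : Function.Injective σ)
    (l μ : Fin n → ℝ) (hl : l ∈ simplex' n) (hμ : μ ∈ simplex' n) (c : ℝ) :
    subc n m σ (pert n l μ) = pert m (subc n m σ l) (subc n m σ μ) ∧
    subc n m σ (spow n c l) = spow m c (subc n m σ l) := by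
  obtain ⟨hlpos, -⟩ := hl
  obtain ⟨hμpos, -⟩ := hμ
  haveI : NeZero m := ⟨by omega⟩
  haveI : NeZero n := ⟨by omega⟩
  have hmne : (Finset.univ : Finset (Fin m)).Nonempty := univ_nonempty
  have hA : 0 < ∑ k, l (σ k) := Finset.sum_pos (fun k _ => hlpos _) hmne
  have hB : 0 < ∑ k, μ (σ k) := Finset.sum_pos (fun k _ => hμpos _) hmne
  have hnne : (Finset.univ : Finset (Fin n)).Nonempty := univ_nonempty
  have hT : 0 < ∑ j, l j * μ j :=
    Finset.sum_pos (fun j _ => mul_pos (hlpos j) (hμpos j)) hnne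
  have hP : 0 < ∑ k, l (σ k) * μ (σ k) :=
    Finset.sum_pos (fun k _ => mul_pos (hlpos _) (hμpos _)) hmne
  have hSc : 0 < ∑ j, l j ^ c :=
    Finset.sum_pos (fun j _ => Real.rpow_pos_of_pos (hlpos j) c) hnne
  have hSσ : 0 < ∑ k, l (σ k) ^ c :=
    Finset.sum_pos (fun k _ => Real.rpow_pos_of_pos (hlpos _) c) hmne
  have key : ∀ (a T P : ℝ), T ≠ 0 → a / T / (P / T) = a / P := by
    intro a T P hT
    rw [div_div_div_comm, div_self hT, div_one]
  constructor
  · funext j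
    simp only [subc, pert]
    rw [← Finset.sum_div, key _ _ _ hT.ne']
    have h1 : ∀ k, l (σ k) / (∑ k, l (σ k)) * (μ (σ k) / ∑ k, μ (σ k))
        = l (σ k) * μ (σ k) / ((∑ k, l (σ k)) * (∑ k, μ (σ k))) := fun k =>
      div_mul_div_comm _ _ _ _
    simp only [h1]
    rw [← Finset.sum_div, key _ _ _ (mul_pos hA hB).ne']
  · funext j
    simp only [subc, spow]
    rw [← Finset.sum_div, key _ _ _ hSc.ne']
    have h1 : ∀ k, (l (σ k) / ∑ k, l (σ k)) ^ c
        = l (σ k) ^ c / (∑ k, l (σ k)) ^ c := fun k =>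
      Real.div_rpow (le_of_lt (hlpos _)) hA.le c
    simp only [h1]
    rw [← Finset.sum_div, key _ _ _ (Real.rpow_pos_of_pos hA c).ne']
end

section
/- Let n ≥ 2, m ≥ 2, let σ : Fin m → Fin n be injective, and define Sub : Δ°ₙ → Δ°ₘ by Sub(λ) j = λ (σ j) / ∑ k, λ (σ k). Let p ≥ 1 and λ₁, …, λ_p ∈ Δ°ₙ. Then the arithmetic mean in the compositional vector space structure is subcompositionally coherent: Sub((1/p) ⊙ (λ₁ ⊕ ⋯ ⊕ λ_p)) = (1/p) ⊙ (Sub(λ₁) ⊕ ⋯ ⊕ Sub(λ_p)), where on the left ⊕ and ⊙ are the perturbation and powering of Δ°ₙ and on the right those of Δ°ₘ. Explicitly, both sides equal the vector whose j-th entry is (∏ₜ λₜ(σ j))^(1/p) / ∑ₖ (∏ₜ λₜ(σ k))^(1/p). -/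
open Real Finset

/-- Iterated perturbation `l ⊕ m₁ ⊕ ⋯ ⊕ m_k` of a first element with a list. -/
noncomputable def pertIter (d : ℕ) (l : Fin d → ℝ) : List (Fin d → ℝ) → (Fin d → ℝ)
  | [] => l
  | m :: rest => pertIter d (pert d l m) rest

lemma pertIter_eq (d : ℕ) [NeZero d] (l : Fin d → ℝ) (ms : List (Fin d → ℝ))
    (hl : ∀ i, 0 < l i) (hms : ∀ g ∈ ms, ∀ i, 0 < g i) :
    ∃ c > 0, ∀ i, pertIter d l ms i = c * (l i * (ms.map (fun g => g i)).prod) := by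
  induction ms generalizing l with
  | nil => exact ⟨1, one_pos, fun i => by simp [pertIter]⟩
  | cons g rest ih =>
    have hgpos : ∀ i, 0 < g i := hms g (List.mem_cons_self ..)
    have hS : 0 < ∑ j, l j * g j :=
      Finset.sum_pos (fun j _ => mul_pos (hl j) (hgpos j)) univ_nonempty
    have hpert : ∀ i, 0 < pert d l g i := fun i =>
      div_pos (mul_pos (hl i) (hgpos i)) hS
    obtain ⟨c, hc, hcf⟩ := ih (pert d l g) hpert
      (fun g' hg' => hms g' (List.mem_cons_of_mem _ hg'))
    refine ⟨c / ∑ j, l j * g j, div_pos hc hS, fun i => ?_⟩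
    show pertIter d (pert d l g) rest i = _
    rw [hcf i]
    simp only [pert, List.map_cons, List.prod_cons]
    ring

lemma spow_scale (d : ℕ) [NeZero d] (c a : ℝ) (ha : 0 < a) (g : Fin d → ℝ)
    (hg : ∀ i, 0 < g i) :
    spow d c (fun i => a * g i) = spow d c g := by
  funext i
  have h : ∀ j, (a * g j) ^ c = a ^ c * g j ^ c := fun j =>
    Real.mul_rpow ha.le (hg j).le
  simp only [spow, h, ← Finset.mul_sum]
  exact mul_div_mul_left _ _ (ne_of_gt (Real.rpow_pos_of_pos ha c))

lemma subc_scale (n m : ℕ) (σ : Fin m → Fin n) (a : ℝ) (ha : a ≠ 0) (g : Fin n → ℝ) :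
    subc n m σ (fun i => a * g i) = subc n m σ g := by
  funext j
  simp only [subc, ← Finset.mul_sum]
  exact mul_div_mul_left _ _ ha

/-- subcompositional coherence of the compositional arithmetic
mean: `Sub((1/p) ⊙ (λ₁ ⊕ ⋯ ⊕ λ_p)) = (1/p) ⊙ (Sub λ₁ ⊕ ⋯ ⊕ Sub λ_p)`, and both
sides are given by the explicit reclosed geometric-mean formula.  (The number
of data points is `p + 1 ≥ 1`.) -/
theorem stmt15 (n m : ℕ) (hn : 2 ≤ n) (hm : 2 ≤ m)
    (σ : Fin m → Fin n) (hσ : Function.Injective σ)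
    (p : ℕ) (lam : Fin (p + 1) → Fin n → ℝ)
    (hlam : ∀ t, lam t ∈ simplex' n) :
    subc n m σ (spow n (1 / (p + 1 : ℝ))
        (pertIter n (lam 0) (List.ofFn fun t : Fin p => lam t.succ)))
      = spow m (1 / (p + 1 : ℝ))
          (pertIter m (subc n m σ (lam 0))
            (List.ofFn fun t : Fin p => subc n m σ (lam t.succ))) ∧
    subc n m σ (spow n (1 / (p + 1 : ℝ))
        (pertIter n (lam 0) (List.ofFn fun t : Fin p => lam t.succ)))
      = fun j => (∏ t, lam t (σ j)) ^ (1 / (p + 1 : ℝ)) /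
          ∑ k, (∏ t, lam t (σ k)) ^ (1 / (p + 1 : ℝ)) := by
  haveI : NeZero n := ⟨by omega⟩
  haveI : NeZero m := ⟨by omega⟩
  set cexp : ℝ := 1 / (p + 1 : ℝ) with hcexp
  set P : Fin n → ℝ := fun i => ∏ t, lam t i with hPdef
  have hP : ∀ i, 0 < P i := fun i => Finset.prod_pos fun t _ => (hlam t).1 i
  -- LHS
  obtain ⟨c0, hc0, h0⟩ := pertIter_eq n (lam 0) (List.ofFn fun t : Fin p => lam t.succ)
    (hlam 0).1 (by
      intro g hg i
      rw [List.mem_ofFn] at hg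
      obtain ⟨t, rfl⟩ := hg
      exact (hlam t.succ).1 i)
  have hIter : pertIter n (lam 0) (List.ofFn fun t : Fin p => lam t.succ)
      = fun i => c0 * P i := by
    funext i
    rw [h0 i]
    congr 1
    simp only [List.map_ofFn, List.prod_ofFn, Function.comp]
    rw [hPdef]
    exact (Fin.prod_univ_succ fun t => lam t i).symm
  have hspowL : spow n cexp (pertIter n (lam 0) (List.ofFn fun t : Fin p => lam t.succ))
      = spow n cexp P := by
    rw [hIter]; exact spow_scale n cexp c0 hc0 P hP
  have hSP : 0 < ∑ j, P j ^ cexp :=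
    Finset.sum_pos (fun j _ => Real.rpow_pos_of_pos (hP j) _) univ_nonempty
  have hspowP : spow n cexp P = fun i => (∑ j, P j ^ cexp)⁻¹ * (P i ^ cexp) := by
    funext i
    rw [spow, div_eq_inv_mul]
  have hL : subc n m σ (spow n cexp (pertIter n (lam 0)
      (List.ofFn fun t : Fin p => lam t.succ)))
      = fun j => (∏ t, lam t (σ j)) ^ cexp / ∑ k, (∏ t, lam t (σ k)) ^ cexp := by
    rw [hspowL, hspowP, subc_scale n m σ _ (inv_ne_zero hSP.ne') (fun i => P i ^ cexp)]
    rfl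
  -- RHS
  have hSt : ∀ t : Fin (p + 1), 0 < ∑ k, lam t (σ k) :=
    fun t => Finset.sum_pos (fun k _ => (hlam t).1 (σ k)) univ_nonempty
  have hsubpos : ∀ t : Fin (p + 1), ∀ j, 0 < subc n m σ (lam t) j :=
    fun t j => div_pos ((hlam t).1 (σ j)) (hSt t)
  obtain ⟨c1, hc1, h1⟩ := pertIter_eq m (subc n m σ (lam 0))
    (List.ofFn fun t : Fin p => subc n m σ (lam t.succ))
    (hsubpos 0) (by
      intro g hg j
      rw [List.mem_ofFn] at hg
      obtain ⟨t, rfl⟩ := hg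
      exact hsubpos t.succ j)
  have hIter2 : pertIter m (subc n m σ (lam 0))
      (List.ofFn fun t : Fin p => subc n m σ (lam t.succ))
      = fun j => (c1 * (∏ t, ∑ k, lam t (σ k))⁻¹) * P (σ j) := by
    funext j
    rw [h1 j]
    simp only [List.map_ofFn, List.prod_ofFn, Function.comp]
    simp only [subc, hPdef]
    rw [Finset.prod_div_distrib,
      Fin.prod_univ_succ (f := fun t => lam t (σ j)),
      Fin.prod_univ_succ (f := fun t => ∑ k, lam t (σ k))]
    field_simp
  have ha : 0 < c1 * (∏ t, ∑ k, lam t (σ k))⁻¹ :=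
    mul_pos hc1 (inv_pos.mpr (Finset.prod_pos fun t _ => hSt t))
  have hR : spow m cexp (pertIter m (subc n m σ (lam 0))
      (List.ofFn fun t : Fin p => subc n m σ (lam t.succ)))
      = fun j => (∏ t, lam t (σ j)) ^ cexp / ∑ k, (∏ t, lam t (σ k)) ^ cexp := by
    rw [hIter2, spow_scale m cexp _ ha (fun j => P (σ j)) (fun j => hP (σ j))]
    rfl
  exact ⟨hL.trans hR.symm, hL⟩
end
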